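/- Hardy-type inequality: if f ∈ L¹(0,∞) and u(x) = ∫_x^∞ f(t) dt, then for any s > 1/2, ∫_0^∞ x^{2(s−1)} |u(x)|² dx ≤ (4/(2s−1)²) ∫_0^∞ x^{2s} |f(x)|² dx. -/

import Mathlib

open MeasureTheory Set

private lemma hardy_Ioi_rpow {c x : ℝ} (hc : 0 < c) (hx : 0 < x) :
    ∫⁻ t in Set.Ioi x, ENNReal.ofReal (t ^ (-(c+1))) = ENNReal.ofReal (x ^ (-c) / c) := by
  have hint : IntegrableOn (fun t : ℝ => t ^ (-(c+1))) (Set.Ioi x) :=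
    integrableOn_Ioi_rpow_of_lt (by linarith) hx
  rw [← ofReal_integral_eq_lintegral_ofReal hint ?_]
  · rw [integral_Ioi_rpow_of_lt (by linarith) hx]
    rw [show -(c+1)+1 = -c by ring, neg_div_neg_eq]
  · filter_upwards [ae_restrict_mem measurableSet_Ioi] with t ht
    exact Real.rpow_nonneg (le_of_lt (hx.trans ht)) _

private lemma hardy_Ioo_rpow {c t : ℝ} (hc : 0 < c) (ht : 0 < t) :
    ∫⁻ x in Set.Ioo 0 t, ENNReal.ofReal (x ^ (c-1)) = ENNReal.ofReal (t ^ c / c) := by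
  have hint : IntegrableOn (fun x : ℝ => x ^ (c-1)) (Set.Ioo 0 t) := by
    have h := intervalIntegral.intervalIntegrable_rpow' (a := 0) (b := t) (r := c-1) (by linarith)
    rw [intervalIntegrable_iff_integrableOn_Ioc_of_le ht.le] at h
    exact h.mono_set Set.Ioo_subset_Ioc_self
  rw [← ofReal_integral_eq_lintegral_ofReal hint ?_]
  · congr 1
    rw [← integral_Ioc_eq_integral_Ioo, ← intervalIntegral.integral_of_le ht.le,
      integral_rpow (Or.inl (by linarith))]
    rw [show c - 1 + 1 = c by ring, Real.zero_rpow hc.ne', sub_zero]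
  · filter_upwards [ae_restrict_mem measurableSet_Ioo] with x hx
    exact Real.rpow_nonneg hx.1.le _

private lemma hardy_CS {μ : Measure ℝ} (φ ψ : ℝ → ENNReal) (hφ : AEMeasurable φ μ)
    (hψ : AEMeasurable ψ μ) :
    (∫⁻ a, φ a * ψ a ∂μ) ^ 2 ≤ (∫⁻ a, φ a ^ 2 ∂μ) * (∫⁻ a, ψ a ^ 2 ∂μ) := by
  have hpq : Real.HolderConjugate 2 2 := Real.HolderConjugate.two_two
  have h := ENNReal.lintegral_mul_le_Lp_mul_Lq μ hpq hφ hψ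
  simp only [Pi.mul_apply] at h
  have h2 := pow_le_pow_left' h 2
  refine h2.trans (le_of_eq ?_)
  rw [mul_pow]
  have e : ∀ X : ENNReal, (X ^ (1/(2:ℝ))) ^ (2:ℕ) = X := by
    intro X
    rw [← ENNReal.rpow_natCast (X ^ (1/(2:ℝ))) 2, ← ENNReal.rpow_mul]
    norm_num
  rw [e, e]
  congr 1 <;> · apply lintegral_congr; intro a
                rw [← ENNReal.rpow_natCast _ 2]; norm_num

private lemma hardy_swap {c : ℝ} (G : ℝ → ENNReal) (hG : Measurable G) :
    ∫⁻ x in Set.Ioi (0:ℝ), ENNReal.ofReal (x ^ (c-1)) * ∫⁻ t in Set.Ioi x, G t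
      = ∫⁻ t in Set.Ioi (0:ℝ), (∫⁻ x in Set.Ioo 0 t, ENNReal.ofReal (x ^ (c-1))) * G t := by
  have hWm : Measurable fun x : ℝ => ENNReal.ofReal (x ^ (c-1)) :=
    (measurable_id.pow_const _).ennreal_ofReal
  set H : ℝ → ℝ → ENNReal := fun x t => {p : ℝ × ℝ | p.1 < p.2}.indicator
      (fun p => ENNReal.ofReal (p.1 ^ (c-1)) * G p.2) (x, t) with hH
  have hHm : Measurable (Function.uncurry H) := by
    apply Measurable.indicator
    · exact (hWm.comp measurable_fst).mul (hG.comp measurable_snd)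
    · exact measurableSet_lt measurable_fst measurable_snd
  have key1 : ∀ x : ℝ, 0 < x → ENNReal.ofReal (x ^ (c-1)) * (∫⁻ t in Set.Ioi x, G t)
      = ∫⁻ t in Set.Ioi (0:ℝ), H x t := by
    intro x hx
    have h1 : ∫⁻ t in Set.Ioi (0:ℝ), H x t
        = ∫⁻ t in Set.Ioi (0:ℝ),
            (Set.Ioi x).indicator (fun t => ENNReal.ofReal (x ^ (c-1)) * G t) t := by
      apply lintegral_congr; intro t
      simp [hH, Set.indicator_apply, Set.mem_Ioi]
    rw [h1, lintegral_indicator measurableSet_Ioi _,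
      Measure.restrict_restrict measurableSet_Ioi,
      Set.inter_eq_left.mpr (Set.Ioi_subset_Ioi hx.le),
      lintegral_const_mul' _ _ ENNReal.ofReal_ne_top]
  have key2 : ∀ t : ℝ, 0 < t → (∫⁻ x in Set.Ioi (0:ℝ), H x t)
      = (∫⁻ x in Set.Ioo 0 t, ENNReal.ofReal (x ^ (c-1))) * G t := by
    intro t ht
    have h1 : ∫⁻ x in Set.Ioi (0:ℝ), H x t
        = ∫⁻ x in Set.Ioi (0:ℝ),
            (Set.Iio t).indicator (fun x => ENNReal.ofReal (x ^ (c-1)) * G t) x := by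
      apply lintegral_congr; intro x
      simp [hH, Set.indicator_apply, Set.mem_Iio]
    rw [h1, lintegral_indicator measurableSet_Iio _,
      Measure.restrict_restrict measurableSet_Iio,
      Set.Iio_inter_Ioi, lintegral_mul_const _ hWm]
  calc ∫⁻ x in Set.Ioi (0:ℝ), ENNReal.ofReal (x ^ (c-1)) * ∫⁻ t in Set.Ioi x, G t
      = ∫⁻ x in Set.Ioi (0:ℝ), ∫⁻ t in Set.Ioi (0:ℝ), H x t := by
        refine lintegral_congr_ae ((ae_restrict_iff' measurableSet_Ioi).2
          (ae_of_all _ fun x hx => key1 x hx))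
    _ = ∫⁻ t in Set.Ioi (0:ℝ), ∫⁻ x in Set.Ioi (0:ℝ), H x t :=
        lintegral_lintegral_swap hHm.aemeasurable
    _ = _ := lintegral_congr_ae ((ae_restrict_iff' measurableSet_Ioi).2
          (ae_of_all _ fun t ht => key2 t ht))

/-- Hardy-type inequality: if `f ∈ L¹(0,∞)` and `u(x) = ∫_x^∞ f(t) dt`, then for any
`s > 1/2`, `∫_0^∞ x^{2(s-1)} |u(x)|² dx ≤ (4/(2s-1)²) ∫_0^∞ x^{2s} |f(x)|² dx`. -/
theorem statement17 (f : ℝ → ℂ) (hf : IntegrableOn f (Set.Ioi 0))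
    (u : ℝ → ℂ) (hu : ∀ x : ℝ, u x = ∫ t in Set.Ioi x, f t)
    (s : ℝ) (hs : 1 / 2 < s) :
    ∫⁻ x in Set.Ioi (0 : ℝ), ENNReal.ofReal (x ^ (2 * (s - 1)) * ‖u x‖ ^ 2)
      ≤ ENNReal.ofReal (4 / (2 * s - 1) ^ 2)
        * ∫⁻ x in Set.Ioi (0 : ℝ), ENNReal.ofReal (x ^ (2 * s) * ‖f x‖ ^ 2) := by
  set c : ℝ := (2*s-1)/2 with hcdef
  have hc : 0 < c := by simp only [hcdef]; linarith
  have hfm := hf.aestronglyMeasurable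
  set f' := hfm.mk f with hf'def
  have hf'm : StronglyMeasurable f' := hfm.stronglyMeasurable_mk
  have hff' : f =ᵐ[volume.restrict (Set.Ioi 0)] f' := hfm.ae_eq_mk
  set F : ℝ → ENNReal := fun t => ENNReal.ofReal ‖f' t‖ with hFdef
  have hF : Measurable F := hf'm.measurable.norm.ennreal_ofReal
  set G : ℝ → ENNReal := fun t => ENNReal.ofReal (t ^ (c+1)) * F t ^ 2 with hGdef
  have hG : Measurable G := ((measurable_id.pow_const _).ennreal_ofReal).mul (hF.pow_const 2)
  -- Step A : bound on u
  have hub : ∀ x : ℝ, 0 < x → ENNReal.ofReal ‖u x‖ ≤ ∫⁻ t in Set.Ioi x, F t := by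
    intro x hx
    have hint : IntegrableOn f (Set.Ioi x) := hf.mono_set (Set.Ioi_subset_Ioi hx.le)
    have h1 : ‖u x‖ ≤ ∫ t in Set.Ioi x, ‖f t‖ := by
      rw [hu]; exact norm_integral_le_integral_norm _
    have h2 : ENNReal.ofReal (∫ t in Set.Ioi x, ‖f t‖)
        = ∫⁻ t in Set.Ioi x, ENNReal.ofReal ‖f t‖ :=
      ofReal_integral_eq_lintegral_ofReal hint.norm (ae_of_all _ fun t => norm_nonneg _)
    have h3 : (∫⁻ t in Set.Ioi x, ENNReal.ofReal ‖f t‖) = ∫⁻ t in Set.Ioi x, F t := by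
      apply lintegral_congr_ae
      have h := ae_restrict_of_ae_restrict_of_subset (Set.Ioi_subset_Ioi hx.le) hff'
      filter_upwards [h] with t ht
      rw [hFdef]; simp [ht]
    exact (ENNReal.ofReal_le_ofReal h1).trans (le_of_eq (h2.trans h3))
  -- Step B : Cauchy–Schwarz
  have hCS : ∀ x : ℝ, 0 < x → (∫⁻ t in Set.Ioi x, F t) ^ 2
      ≤ ENNReal.ofReal (x ^ (-c) / c) * ∫⁻ t in Set.Ioi x, G t := by
    intro x hx
    set φ : ℝ → ENNReal := fun t => ENNReal.ofReal (t ^ (-(c+1)/2)) with hφdef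
    set ψ : ℝ → ENNReal := fun t => ENNReal.ofReal (t ^ ((c+1)/2)) * F t with hψdef
    have hφm : Measurable φ := (measurable_id.pow_const _).ennreal_ofReal
    have hψm : Measurable ψ := ((measurable_id.pow_const _).ennreal_ofReal).mul hF
    have hsplit : (∫⁻ t in Set.Ioi x, F t) = ∫⁻ t in Set.Ioi x, φ t * ψ t := by
      refine setLIntegral_congr_fun measurableSet_Ioi (fun t ht => ?_)
      have htpos : (0:ℝ) < t := hx.trans ht
      rw [hφdef, hψdef]
      simp only
      rw [← mul_assoc, ← ENNReal.ofReal_mul (Real.rpow_nonneg htpos.le _),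
        ← Real.rpow_add htpos, show -(c+1)/2 + (c+1)/2 = 0 by ring, Real.rpow_zero,
        ENNReal.ofReal_one, one_mul]
    have hφ2 : (∫⁻ t in Set.Ioi x, φ t ^ 2) = ENNReal.ofReal (x ^ (-c) / c) := by
      rw [← hardy_Ioi_rpow hc hx]
      refine setLIntegral_congr_fun measurableSet_Ioi (fun t ht => ?_)
      have htpos : (0:ℝ) < t := hx.trans ht
      rw [hφdef]
      simp only
      rw [← ENNReal.ofReal_pow (Real.rpow_nonneg htpos.le _),
        ← Real.rpow_natCast (t ^ (-(c+1)/2)) 2, ← Real.rpow_mul htpos.le]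
      norm_num
    have hψ2 : (∫⁻ t in Set.Ioi x, ψ t ^ 2) = ∫⁻ t in Set.Ioi x, G t := by
      refine setLIntegral_congr_fun measurableSet_Ioi (fun t ht => ?_)
      have htpos : (0:ℝ) < t := hx.trans ht
      simp only [hψdef, hGdef]
      rw [mul_pow, ← ENNReal.ofReal_pow (Real.rpow_nonneg htpos.le _),
        ← Real.rpow_natCast (t ^ ((c+1)/2)) 2, ← Real.rpow_mul htpos.le]
      norm_num
    rw [hsplit, ← hφ2, ← hψ2]
    exact hardy_CS φ ψ hφm.aemeasurable hψm.aemeasurable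
  -- main chain
  calc ∫⁻ x in Set.Ioi (0:ℝ), ENNReal.ofReal (x ^ (2 * (s - 1)) * ‖u x‖ ^ 2)
      ≤ ∫⁻ x in Set.Ioi (0:ℝ), ENNReal.ofReal (1/c)
          * (ENNReal.ofReal (x ^ (c-1)) * ∫⁻ t in Set.Ioi x, G t) := by
        refine lintegral_mono_ae ((ae_restrict_iff' measurableSet_Ioi).2
          (ae_of_all _ fun x hx => ?_))
        calc ENNReal.ofReal (x ^ (2 * (s - 1)) * ‖u x‖ ^ 2)
            = ENNReal.ofReal (x ^ (2 * (s - 1))) * ENNReal.ofReal ‖u x‖ ^ 2 := by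
              rw [ENNReal.ofReal_mul (Real.rpow_nonneg hx.le _),
                ENNReal.ofReal_pow (norm_nonneg _)]
          _ ≤ ENNReal.ofReal (x ^ (2 * (s - 1))) * (∫⁻ t in Set.Ioi x, F t) ^ 2 :=
              mul_le_mul_right (pow_le_pow_left' (hub x hx) 2) _
          _ ≤ ENNReal.ofReal (x ^ (2 * (s - 1)))
                * (ENNReal.ofReal (x ^ (-c) / c) * ∫⁻ t in Set.Ioi x, G t) :=
              mul_le_mul_right (hCS x hx) _
          _ = ENNReal.ofReal (1/c)
                * (ENNReal.ofReal (x ^ (c-1)) * ∫⁻ t in Set.Ioi x, G t) := by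
              rw [← mul_assoc, ← mul_assoc]
              congr 1
              rw [← ENNReal.ofReal_mul (Real.rpow_nonneg hx.le _),
                ← ENNReal.ofReal_mul (by positivity)]
              congr 1
              rw [div_eq_mul_inv, ← mul_assoc, ← Real.rpow_add hx,
                show 2 * (s - 1) + -c = c - 1 by rw [hcdef]; ring]
              ring
    _ = ENNReal.ofReal (1/c) * ∫⁻ x in Set.Ioi (0:ℝ),
          ENNReal.ofReal (x ^ (c-1)) * ∫⁻ t in Set.Ioi x, G t :=
        lintegral_const_mul' _ _ ENNReal.ofReal_ne_top
    _ = ENNReal.ofReal (1/c) * ∫⁻ t in Set.Ioi (0:ℝ),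
          (∫⁻ x in Set.Ioo 0 t, ENNReal.ofReal (x ^ (c-1))) * G t := by
        rw [hardy_swap G hG]
    _ = ENNReal.ofReal (1/c) * ∫⁻ t in Set.Ioi (0:ℝ),
          ENNReal.ofReal (1/c) * ENNReal.ofReal (t ^ (2*s) * ‖f' t‖ ^ 2) := by
        congr 1
        refine setLIntegral_congr_fun measurableSet_Ioi (fun t ht => ?_)
        have ht' : (0:ℝ) < t := ht
        rw [hardy_Ioo_rpow hc ht']
        simp only [hGdef, hFdef]
        rw [← ENNReal.ofReal_pow (norm_nonneg _),
          ← ENNReal.ofReal_mul (Real.rpow_nonneg ht'.le _),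
          ← ENNReal.ofReal_mul (by positivity),
          ← ENNReal.ofReal_mul (by positivity)]
        congr 1
        rw [show t ^ (2*s) = t ^ c * t ^ (c+1) from by
          rw [← Real.rpow_add ht']; congr 1; rw [hcdef]; ring]
        generalize t ^ c = A
        generalize t ^ (c+1) = B
        ring
    _ = ENNReal.ofReal (1/c) * (ENNReal.ofReal (1/c)
          * ∫⁻ t in Set.Ioi (0:ℝ), ENNReal.ofReal (t ^ (2*s) * ‖f' t‖ ^ 2)) := by
        rw [lintegral_const_mul' _ _ ENNReal.ofReal_ne_top]
    _ = ENNReal.ofReal (4 / (2 * s - 1) ^ 2)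
          * ∫⁻ x in Set.Ioi (0:ℝ), ENNReal.ofReal (x ^ (2 * s) * ‖f x‖ ^ 2) := by
        rw [← mul_assoc, ← ENNReal.ofReal_mul (by positivity)]
        congr 1
        · congr 1
          rw [hcdef]
          have h1 : (2*s - 1) ≠ 0 := by linarith
          field_simp
          ring
        · refine lintegral_congr_ae ?_
          filter_upwards [hff'] with t ht
          rw [ht]
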